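/- Let H and A be linearly ordered abelian groups, K a field, σ : A → Kˣ a homomorphism, and β : H × H → A a normalized symmetric 2-cocycle. Let φ̄ be a field automorphism of K, φ₁ : A → A a group homomorphism, and φ₂ : H → H an order-preserving group automorphism, such that φ₁(−β(h,h')) = −β(φ₂(h), φ₂(h')) for all h, h' ∈ H and φ̄(σ(a)) = σ(φ₁(a)) for all a ∈ A. Then the map Φ on the twisted Hahn series field K(t^H,β) defined by Φ(Σ_h a_h t^h) = Σ_h φ̄(a_h) t^{φ₂(h)} (i.e. (Φ a).coeff(φ₂(h)) = φ̄(a.coeff h)) is a ring automorphism: it is bijective, additive, and satisfies Φ(a ⋆ b) = Φ(a) ⋆ Φ(b). -/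

import Mathlib

/-- Twisted multiplication on Hahn series. -/
noncomputable def tmul {K H A : Type*} [Field K]
    [AddCommGroup H] [LinearOrder H] [IsOrderedAddMonoid H] [AddCommGroup A]
    (σ : A → Kˣ) (β : H → H → A) (x y : HahnSeries H K) : HahnSeries H K where
  coeff l := ∑ ij ∈ Finset.addAntidiagonal x.isPWO_support y.isPWO_support l,
      x.coeff ij.1 * y.coeff ij.2 * (σ (-β ij.1 ij.2) : K)
  isPWO_support' := by
    refine Set.IsPWO.mono (x.isPWO_support.add y.isPWO_support) ?_
    intro l hl
    obtain ⟨ij, hij, -⟩ :=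
      Finset.exists_ne_zero_of_sum_ne_zero (Function.mem_support.mp hl)
    replace hij := Finset.mem_addAntidiagonal.mp hij
    exact Set.mem_add.mpr ⟨ij.1, hij.1, ij.2, hij.2.1, hij.2.2⟩

/-- The lift `Φ (∑ a_h t^h) = ∑ φK (a_h) t^{e h}` of a field automorphism `φK`
and an order-preserving group automorphism `e` to Hahn series, i.e.
`(Φ a).coeff l = φK (a.coeff (e⁻¹ l))`. -/
noncomputable def tmap {K H : Type*} [Field K] [AddCommGroup H] [LinearOrder H] [IsOrderedAddMonoid H]
    (φK : K ≃+* K) (e : H ≃+ H) (he : Monotone ⇑e) (a : HahnSeries H K) :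
    HahnSeries H K where
  coeff l := φK (a.coeff (e.symm l))
  isPWO_support' := by
    refine Set.IsPWO.mono ((a.isPWO_support.image_of_monotone he)) ?_
    intro l hl
    refine ⟨e.symm l, ?_, by simp⟩
    intro h0
    exact Function.mem_support.mp hl (by rw [h0, map_zero])

/-- STATEMENT 13: Let `β : H × H → A` be a normalized symmetric 2-cocycle and
`σ : A → Kˣ` a homomorphism. If `φK` is a field automorphism of `K`,
`φ₁ : A → A` a group homomorphism and `e : H → H` an order-preserving group
automorphism such that `φ₁ (-β h h') = -β (e h) (e h')` and
`φK (σ a) = σ (φ₁ a)`, then the lift `Φ (∑ a_h t^h) = ∑ φK (a_h) t^{e h}` is a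
ring automorphism of the twisted Hahn series field `K(t^H,β)`: it is bijective,
additive, and multiplicative for the twisted multiplication. -/
theorem twisted_hahn_series_lift_automorphism
    {K H A : Type*} [Field K]
    [AddCommGroup H] [LinearOrder H] [IsOrderedAddMonoid H]
    [AddCommGroup A] [LinearOrder A] [IsOrderedAddMonoid A]
    (σ : A → Kˣ) (hσ : ∀ a a' : A, σ (a + a') = σ a * σ a')
    (β : H → H → A)
    (hβsymm : ∀ h h' : H, β h h' = β h' h)
    (hβnorm : ∀ h : H, β h 0 = 0 ∧ β 0 h = 0)
    (hβcoc : ∀ h h' h'' : H, β h h' + β (h + h') h'' = β h' h'' + β h (h' + h''))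
    (φK : K ≃+* K) (φ₁ : A →+ A) (e : H ≃+ H) (he : Monotone ⇑e)
    (hφβ : ∀ h h' : H, φ₁ (-(β h h')) = -(β (e h) (e h')))
    (hφσ : ∀ a : A, φK ((σ a : K)) = ((σ (φ₁ a) : K))) :
    (∀ (a : HahnSeries H K) (h : H), (tmap φK e he a).coeff (e h) = φK (a.coeff h)) ∧
    Function.Bijective (tmap φK e he) ∧
    (∀ a b : HahnSeries H K, tmap φK e he (a + b) = tmap φK e he a + tmap φK e he b) ∧
    (∀ a b : HahnSeries H K,
      tmap φK e he (tmul σ β a b) = tmul σ β (tmap φK e he a) (tmap φK e he b)) := by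
  have hsm : StrictMono ⇑e := he.strictMono_of_injective e.injective
  have he' : Monotone ⇑e.symm := by
    intro x y hxy
    rw [← e.apply_symm_apply x, ← e.apply_symm_apply y] at hxy
    exact hsm.le_iff_le.mp hxy
  refine ⟨fun a h => by simp [tmap], ?_, ?_, ?_⟩
  · constructor
    · intro a b hab
      ext h
      have := congrArg (fun x => x.coeff (e h)) hab
      simpa [tmap] using φK.injective this
    · intro b
      refine ⟨tmap φK.symm e.symm he' b, ?_⟩
      ext l
      simp [tmap]
  · intro a b
    ext l
    simp [tmap]
  · intro a b
    ext l
    show φK ((tmul σ β a b).coeff (e.symm l)) = _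
    rw [tmul, tmul]
    simp only
    rw [map_sum]
    refine Finset.sum_nbij' (fun ij => (e ij.1, e ij.2)) (fun ij => (e.symm ij.1, e.symm ij.2))
      ?_ ?_ (by simp) (by simp) ?_
    · intro ij hij
      replace hij := Finset.mem_addAntidiagonal.mp hij
      apply Finset.mem_addAntidiagonal.mpr
      refine ⟨?_, ?_, ?_⟩
      · simp only [Function.mem_support, tmap]
        simpa using hij.1
      · simp only [Function.mem_support, tmap]
        simpa using hij.2.1
      · rw [← map_add, hij.2.2, e.apply_symm_apply]
    · intro ij hij
      replace hij := Finset.mem_addAntidiagonal.mp hij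
      apply Finset.mem_addAntidiagonal.mpr
      simp only [Function.mem_support, tmap] at hij
      refine ⟨fun h0 => hij.1 (by simp [h0]), fun h0 => hij.2.1 (by simp [h0]), ?_⟩
      · rw [← map_add, hij.2.2]
    · intro ij hij
      simp only [tmap, map_mul, e.symm_apply_apply]
      rw [hφσ, hφβ]
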